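/- Each irreducible component of the m-th jet scheme at the origin of the node x₁x₂ = 0 is the vanishing locus of X_{1,1} = … = X_{1,r₁} = X_{2,1} = … = X_{2,r₂} = 0 for some r₁, r₂ ≥ 0 with r₁ + r₂ = m − 1, viewed inside Spec k[X̲₁,…,X̲_m]. -/

import Mathlib

/-!
STATEMENT 1: Each irreducible component of the m-th jet scheme at the origin of the node
`x₁x₂ = 0` is the vanishing locus of `X_{1,1} = … = X_{1,r₁} = X_{2,1} = … = X_{2,r₂} = 0`
for some `r₁, r₂ ≥ 0` with `r₁ + r₂ = m − 1`, inside `Spec k[X̲₁,…,X̲ₘ]`.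
(Variable `(j,i) : Fin 2 × Fin m` stands for `X_{j+1,i+1}`.)
-/

open MvPolynomial

lemma span_X_image_isPrime {σ : Type*} {k : Type*} [CommRing k] [IsDomain k] (s : Set σ) :
    (Ideal.span (X '' s : Set (MvPolynomial σ k))).IsPrime := by
  classical
  set φ : MvPolynomial σ k →ₐ[k] MvPolynomial {i // i ∉ s} k :=
    aeval (fun i => if h : i ∈ s then 0 else X ⟨i, h⟩) with hφ
  have key : ∀ f : MvPolynomial σ k,
      f - rename (Subtype.val : {i // i ∉ s} → σ) (φ f) ∈ Ideal.span (X '' s) := by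
    intro f
    induction f using MvPolynomial.induction_on with
    | C a => simp [hφ, aeval_C, algHom_C]
    | add p q hp hq =>
        have : (p + q) - rename Subtype.val (φ (p + q)) =
            (p - rename Subtype.val (φ p)) + (q - rename Subtype.val (φ q)) := by
          rw [map_add, map_add]; ring
        rw [this]; exact Ideal.add_mem _ hp hq
    | mul_X p i hp =>
        by_cases hi : i ∈ s
        · have : φ (p * X i) = 0 := by simp [hφ, hi]
          rw [this, map_zero, sub_zero]
          exact Ideal.mul_mem_left _ _ (Ideal.subset_span ⟨i, hi, rfl⟩)
        · have : φ (p * X i) = φ p * X ⟨i, hi⟩ := by simp [hφ, hi]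
          rw [this, map_mul, rename_X]
          have : p * X i - rename Subtype.val (φ p) * X i =
              (p - rename Subtype.val (φ p)) * X i := by ring
          rw [this]
          exact Ideal.mul_mem_right _ _ hp
  have hker : Ideal.span (X '' s : Set (MvPolynomial σ k)) = RingHom.ker φ := by
    apply le_antisymm
    · rw [Ideal.span_le]
      rintro _ ⟨i, hi, rfl⟩
      simp [RingHom.mem_ker, hφ, hi]
    · intro f hf
      have h0 : φ f = 0 := hf
      have := key f
      rwa [h0, map_zero, sub_zero] at this
  rw [hker]
  exact RingHom.ker_isPrime _

noncomputable def jetPoly (k : Type*) [CommRing k] (N m : ℕ)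
    (f : MvPolynomial (Fin N) k) (n : ℕ) : MvPolynomial (Fin N × Fin m) k :=
  (Polynomial.coeff
    (MvPolynomial.aeval
      (fun j : Fin N =>
        ∑ i : Fin m,
          Polynomial.C (MvPolynomial.X (R := k) (j, i)) * Polynomial.X ^ ((i : ℕ) + 1)) f) n)

noncomputable def jetIdeal (k : Type*) [CommRing k] (N : ℕ)
    (I : Ideal (MvPolynomial (Fin N) k)) (m : ℕ) :
    Ideal (MvPolynomial (Fin N × Fin m) k) :=
  Ideal.span {g | ∃ f ∈ I, ∃ n, 1 ≤ n ∧ n ≤ m ∧ g = jetPoly k N m f n}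

lemma jetPoly_node (k : Type*) [CommRing k] (m n : ℕ) :
    jetPoly k 2 m (X 0 * X 1) n =
      ∑ x : Fin m × Fin m,
        if (x.1 : ℕ) + (x.2 : ℕ) + 2 = n then X ((0 : Fin 2), x.1) * X ((1 : Fin 2), x.2) else 0 := by
  classical
  rw [jetPoly, map_mul, aeval_X, aeval_X, Finset.sum_mul_sum]
  simp only [Polynomial.finset_sum_coeff]
  rw [← Finset.sum_product']
  apply Finset.sum_congr rfl
  rintro ⟨i, j⟩ -
  rw [mul_mul_mul_comm, ← Polynomial.C_mul, ← pow_add]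
  rw [Polynomial.coeff_C_mul, Polynomial.coeff_X_pow]
  simp only [mul_ite, mul_one, mul_zero]
  congr 1
  · simp only [eq_iff_iff]; constructor <;> omega

lemma jetPoly_node_mul (k : Type*) [CommRing k] (m : ℕ) (q : MvPolynomial (Fin 2) k) (n : ℕ) :
    jetPoly k 2 m (X 0 * X 1 * q) n =
      ∑ x ∈ Finset.HasAntidiagonal.antidiagonal n,
        jetPoly k 2 m (X 0 * X 1) x.1 *
          Polynomial.coeff
            (MvPolynomial.aeval
              (fun j : Fin 2 =>
                ∑ i : Fin m,
                  Polynomial.C (MvPolynomial.X (R := k) (j, i)) * Polynomial.X ^ ((i : ℕ) + 1)) q)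
            x.2 := by
  simp only [jetPoly]
  rw [map_mul, Polynomial.coeff_mul]

theorem node_jet_scheme_minimal_primes (k : Type*) [Field k] [IsAlgClosed k] [CharZero k]
    (m : ℕ) (hm : 1 ≤ m)
    (p : Ideal (MvPolynomial (Fin 2 × Fin m) k))
    (hp : p ∈ (jetIdeal k 2 (Ideal.span {(X 0 * X 1 : MvPolynomial (Fin 2) k)}) m).minimalPrimes) :
    ∃ r₁ r₂ : ℕ, r₁ + r₂ = m - 1 ∧
      p = Ideal.span
        (((fun i : Fin m => (X ((0 : Fin 2), i) : MvPolynomial (Fin 2 × Fin m) k)) ''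
            {i : Fin m | (i : ℕ) < r₁}) ∪
         ((fun i : Fin m => (X ((1 : Fin 2), i) : MvPolynomial (Fin 2 × Fin m) k)) ''
            {i : Fin m | (i : ℕ) < r₂})) := by
  classical
  obtain ⟨⟨hprime, hle⟩, hmin⟩ := hp
  have hFmem : ∀ n, 1 ≤ n → n ≤ m →
      jetPoly k 2 m (X 0 * X 1) n ∈
        jetIdeal k 2 (Ideal.span {(X 0 * X 1 : MvPolynomial (Fin 2) k)}) m :=
    fun n h1 h2 => Ideal.subset_span ⟨X 0 * X 1, Ideal.subset_span rfl, n, h1, h2, rfl⟩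
  set P1 : ℕ → Prop := fun r => ∀ i : Fin m, (i : ℕ) < r → X ((0 : Fin 2), i) ∈ p with hP1
  set P2 : ℕ → Prop := fun r => ∀ i : Fin m, (i : ℕ) < r → X ((1 : Fin 2), i) ∈ p with hP2
  set r1 := Nat.findGreatest P1 m with hr1def
  set r2 := Nat.findGreatest P2 m with hr2def
  have hr1 : P1 r1 := Nat.findGreatest_spec (Nat.zero_le m) (fun i hi => absurd hi (by omega))
  have hr2 : P2 r2 := Nat.findGreatest_spec (Nat.zero_le m) (fun i hi => absurd hi (by omega))
  have hnot1 : ∀ h : r1 < m, X ((0 : Fin 2), (⟨r1, h⟩ : Fin m)) ∉ p := by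
    intro h hmem
    refine Nat.findGreatest_is_greatest (Nat.lt_succ_self r1) (by omega) ?_
    intro i hi
    rcases Nat.lt_or_ge (i : ℕ) r1 with h' | h'
    · exact hr1 i h'
    · have hieq : i = (⟨r1, h⟩ : Fin m) := Fin.ext (show (i : ℕ) = r1 by omega)
      rw [hieq]; exact hmem
  have hnot2 : ∀ h : r2 < m, X ((1 : Fin 2), (⟨r2, h⟩ : Fin m)) ∉ p := by
    intro h hmem
    refine Nat.findGreatest_is_greatest (Nat.lt_succ_self r2) (by omega) ?_
    intro i hi
    rcases Nat.lt_or_ge (i : ℕ) r2 with h' | h'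
    · exact hr2 i h'
    · have hieq : i = (⟨r2, h⟩ : Fin m) := Fin.ext (show (i : ℕ) = r2 by omega)
      rw [hieq]; exact hmem
  -- key claim : m - 1 ≤ r1 + r2
  have hsum : m - 1 ≤ r1 + r2 := by
    by_contra hlt
    push_neg at hlt
    have hm2 : r1 + r2 + 2 ≤ m := by omega
    have h1m : r1 < m := by omega
    have h2m : r2 < m := by omega
    set i1 : Fin m := ⟨r1, h1m⟩ with hi1
    set i2 : Fin m := ⟨r2, h2m⟩ with hi2
    have hF := hle (hFmem (r1 + r2 + 2) (by omega) hm2)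
    rw [jetPoly_node] at hF
    rw [← Finset.add_sum_erase _ _ (Finset.mem_univ (i1, i2))] at hF
    rw [if_pos rfl] at hF
    have hrest :
        (∑ x ∈ Finset.univ.erase (i1, i2),
          if (x.1 : ℕ) + (x.2 : ℕ) + 2 = r1 + r2 + 2 then
            X ((0 : Fin 2), x.1) * X ((1 : Fin 2), x.2) else 0) ∈ p := by
      refine Ideal.sum_mem _ ?_
      intro x hx
      split_ifs with h
      · rcases Nat.lt_trichotomy (x.1 : ℕ) r1 with h' | h' | h'
        · exact Ideal.mul_mem_right _ _ (hr1 x.1 h')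
        · exfalso
          have hx2 : (x.2 : ℕ) = r2 := by omega
          have : x = (i1, i2) := by
            ext
            · exact h'
            · exact hx2
          exact (Finset.mem_erase.mp hx).1 this
        · have : (x.2 : ℕ) < r2 := by omega
          exact Ideal.mul_mem_left _ _ (hr2 x.2 this)
      · exact zero_mem _
    have hterm : X ((0 : Fin 2), i1) * X ((1 : Fin 2), i2) ∈ p := by
      have := p.sub_mem hF hrest
      simpa using this
    rcases hprime.mem_or_mem hterm with h | h
    · exact hnot1 h1m h
    · exact hnot2 h2m h
  -- choose the component
  set s1 := min r1 (m - 1) with hs1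
  set s2 := m - 1 - s1 with hs2
  have hs1le : s1 ≤ r1 := min_le_left _ _
  have hs2le : s2 ≤ r2 := by omega
  set S : Set (Fin 2 × Fin m) :=
    (Prod.mk (0 : Fin 2) '' {i : Fin m | (i : ℕ) < s1}) ∪
    (Prod.mk (1 : Fin 2) '' {i : Fin m | (i : ℕ) < s2}) with hS
  have hXS : (X '' S : Set (MvPolynomial (Fin 2 × Fin m) k)) =
      ((fun i : Fin m => (X ((0 : Fin 2), i) : MvPolynomial (Fin 2 × Fin m) k)) ''
          {i : Fin m | (i : ℕ) < s1}) ∪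
       ((fun i : Fin m => (X ((1 : Fin 2), i) : MvPolynomial (Fin 2 × Fin m) k)) ''
          {i : Fin m | (i : ℕ) < s2}) := by
    rw [hS, Set.image_union, Set.image_image, Set.image_image]
  have hPprime : (Ideal.span (X '' S : Set (MvPolynomial (Fin 2 × Fin m) k))).IsPrime :=
    span_X_image_isPrime S
  have hPlep : Ideal.span (X '' S : Set (MvPolynomial (Fin 2 × Fin m) k)) ≤ p := by
    rw [Ideal.span_le]
    rintro _ ⟨y, hy, rfl⟩
    rcases hy with ⟨i, hi, rfl⟩ | ⟨i, hi, rfl⟩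
    · exact hr1 i (lt_of_lt_of_le hi hs1le)
    · exact hr2 i (lt_of_lt_of_le hi hs2le)
  have hXgen : ∀ j ≤ m, jetPoly k 2 m (X 0 * X 1) j ∈
      Ideal.span (X '' S : Set (MvPolynomial (Fin 2 × Fin m) k)) := by
    intro j hj
    rw [jetPoly_node]
    refine Ideal.sum_mem _ ?_
    intro x _
    split_ifs with h
    · rcases Nat.lt_or_ge (x.1 : ℕ) s1 with h' | h'
      · exact Ideal.mul_mem_right _ _
          (Ideal.subset_span ⟨((0 : Fin 2), x.1), Or.inl ⟨x.1, h', rfl⟩, rfl⟩)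
      · have hb : (x.2 : ℕ) < s2 := by omega
        exact Ideal.mul_mem_left _ _
          (Ideal.subset_span ⟨((1 : Fin 2), x.2), Or.inr ⟨x.2, hb, rfl⟩, rfl⟩)
    · exact zero_mem _
  have hJleP : jetIdeal k 2 (Ideal.span {(X 0 * X 1 : MvPolynomial (Fin 2) k)}) m ≤
      Ideal.span (X '' S : Set (MvPolynomial (Fin 2 × Fin m) k)) := by
    rw [jetIdeal, Ideal.span_le]
    rintro _ ⟨f, hf, n, h1, h2, rfl⟩
    rw [Ideal.mem_span_singleton] at hf
    obtain ⟨q, rfl⟩ := hf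
    rw [jetPoly_node_mul]
    refine Ideal.sum_mem _ ?_
    rintro ⟨a, b⟩ hab
    have hab' := Finset.HasAntidiagonal.mem_antidiagonal.mp hab
    exact Ideal.mul_mem_right _ _ (hXgen a (by omega))
  have hpeq : p = Ideal.span (X '' S : Set (MvPolynomial (Fin 2 × Fin m) k)) :=
    le_antisymm (hmin ⟨hPprime, hJleP⟩ hPlep) hPlep
  exact ⟨s1, s2, by omega, by rw [hpeq, hXS]⟩
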